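/- Let R be a Noetherian local ring, f ∈ m_R an element whose image f̄ in R_red := R/nil(R) is a nonzerodivisor, and suppose R/fR is reduced (i.e. nil(R/fR) = 0). Then R is reduced and f is a nonzerodivisor on R. -/

import Mathlib

/-- if `f` is in the maximal ideal of a Noetherian local ring `R`, the image
of `f` in `R_red = R/nil(R)` is a nonzerodivisor, and `R/fR` is reduced, then `R` is
reduced and `f` is a nonzerodivisor on `R`. -/
theorem reduced_of_active_and_reduced_fibre
    {R : Type*} [CommRing R] [IsNoetherianRing R] [IsLocalRing R]
    (f : R) (hf : f ∈ IsLocalRing.maximalIdeal R)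
    (hact : Ideal.Quotient.mk (nilradical R) f ∈ nonZeroDivisors (R ⧸ nilradical R))
    (hred : IsReduced (R ⧸ Ideal.span {f})) :
    IsReduced R ∧ f ∈ nonZeroDivisors R := by
  have hle : nilradical R ≤ Ideal.span {f} • (nilradical R : Ideal R) := by
    intro x hx
    have hnil : IsNilpotent x := hx
    -- image of x in R/(f) is nilpotent, hence zero
    have h1 : (Ideal.Quotient.mk (Ideal.span {f})) x = 0 := by
      have : IsNilpotent ((Ideal.Quotient.mk (Ideal.span {f})) x) :=
        hnil.map (Ideal.Quotient.mk (Ideal.span {f}))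
      exact this.eq_zero
    have h2 : x ∈ Ideal.span {f} := by
      rwa [Ideal.Quotient.eq_zero_iff_mem] at h1
    obtain ⟨y, hy⟩ := Ideal.mem_span_singleton'.mp h2
    -- y ∈ nilradical R
    have hyN : y ∈ nilradical R := by
      have hx0 : (Ideal.Quotient.mk (nilradical R)) x = 0 :=
        Ideal.Quotient.eq_zero_iff_mem.mpr hx
      have : (Ideal.Quotient.mk (nilradical R)) f * (Ideal.Quotient.mk (nilradical R)) y = 0 := by
        rw [← map_mul]
        rw [mul_comm] at hy
        rw [hy, hx0]
      have := hact.2 _ (by rwa [mul_comm] at this)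
      rwa [Ideal.Quotient.eq_zero_iff_mem] at this
    have hx' : x = f • y := by rw [smul_eq_mul, mul_comm, hy]
    rw [hx']
    exact Submodule.smul_mem_smul (Ideal.mem_span_singleton_self f) hyN
  have hbot : nilradical R = ⊥ :=
    Submodule.eq_bot_of_le_smul_of_le_jacobson_bot (Ideal.span {f}) (nilradical R)
      (IsNoetherian.noetherian _) hle
      (by rw [IsLocalRing.jacobson_eq_maximalIdeal ⊥ bot_ne_top]
          exact (Ideal.span_singleton_le_iff_mem _).mpr hf)
  have hredR : IsReduced R := ⟨fun a ha => by simpa [hbot, Ideal.mem_bot] using (mem_nilradical.mpr ha)⟩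
  refine ⟨hredR, mem_nonZeroDivisors_iff_right.mpr fun x hx => ?_⟩
  have hinj : Function.Injective (Ideal.Quotient.mk (nilradical R)) := by
    intro a b hab
    have : a - b ∈ nilradical R := by
      rw [← Ideal.Quotient.eq_zero_iff_mem, map_sub, hab, sub_self]
    rwa [hbot, Ideal.mem_bot, sub_eq_zero] at this
  have : (Ideal.Quotient.mk (nilradical R)) x * (Ideal.Quotient.mk (nilradical R)) f = 0 := by
    rw [← map_mul, hx, map_zero]
  have := hact.2 _ this
  have : x = 0 := by
    apply hinj; rw [map_zero]; exact this
  exact this
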